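/- If H is an infinite-dimensional complex Hilbert space, then every maximal compatible subset of a star [S⟩_k in G_k(H) is infinite. -/

import Mathlib

def Compatible {H : Type*} [NormedAddCommGroup H] [InnerProductSpace ℂ H]
    (X Y : Submodule ℂ H) : Prop :=
  ∃ X' Y' Z : Submodule ℂ H, X' ⟂ Y' ∧ X' ⟂ Z ∧ Y' ⟂ Z ∧ X = X' ⊔ Z ∧ Y = Y' ⊔ Z

/-- A set of subspaces is compatible if any two distinct members are compatible. -/
def CompatibleSet {H : Type*} [NormedAddCommGroup H] [InnerProductSpace ℂ H]
    (M : Set (Submodule ℂ H)) : Prop :=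
  ∀ X ∈ M, ∀ Y ∈ M, X ≠ Y → Compatible X Y

lemma Compatible.symm' {H : Type*} [NormedAddCommGroup H] [InnerProductSpace ℂ H]
    {X Y : Submodule ℂ H} (h : Compatible X Y) : Compatible Y X := by
  obtain ⟨X', Y', Z, h1, h2, h3, h4, h5⟩ := h
  exact ⟨Y', X', Z, h1.symm, h3, h2, h5, h4⟩

theorem stmt_9 {H : Type*} [NormedAddCommGroup H] [InnerProductSpace ℂ H] [CompleteSpace H]
    (hinf : ¬ FiniteDimensional ℂ H) {k : ℕ} (hk1 : 1 ≤ k)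
    (S : Submodule ℂ H) (hS : Module.finrank ℂ S = k - 1) [FiniteDimensional ℂ S]
    (M : Set (Submodule ℂ H))
    (hMstar : ∀ X ∈ M, S ≤ X ∧ Module.finrank ℂ X = k)
    (hMcomp : CompatibleSet M)
    (hmax : ∀ M' : Set (Submodule ℂ H),
      (∀ X ∈ M', S ≤ X ∧ Module.finrank ℂ X = k) → CompatibleSet M' → M ⊆ M' → M' = M) :
    M.Infinite := by
  by_contra hfin
  rw [Set.not_infinite] at hfin
  have hfd : ∀ X ∈ M, FiniteDimensional ℂ X := fun X hX =>
    Module.finite_of_finrank_pos (by rw [(hMstar X hX).2]; omega)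
  set W : Submodule ℂ H := S ⊔ hfin.toFinset.sup id with hWdef
  have hWfd : FiniteDimensional ℂ W := by
    have h1 : FiniteDimensional ℂ (hfin.toFinset.sup id : Submodule ℂ H) := by
      refine Finset.sup_induction (p := fun N : Submodule ℂ H => FiniteDimensional ℂ N)
        inferInstance (fun a ha b hb => @Submodule.finiteDimensional_sup ℂ H _ _ _ a b ha hb)
        (fun X hX => hfd X (hfin.mem_toFinset.mp hX))
    exact Submodule.finiteDimensional_sup _ _
  have hSW : S ≤ W := le_sup_left
  have hWne : Wᗮ ≠ ⊥ := by
    intro hbot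
    have hWtop : W = ⊤ := Submodule.orthogonal_eq_bot_iff.mp hbot
    exact hinf (Module.Finite.equiv (LinearEquiv.ofTop W hWtop))
  obtain ⟨v, hvW, hv0⟩ := Submodule.exists_mem_ne_zero_of_ne_bot hWne
  set X : Submodule ℂ H := S ⊔ Submodule.span ℂ {v} with hXdef
  have hspanW : Submodule.span ℂ {v} ≤ Wᗮ := by
    rw [Submodule.span_singleton_le_iff_mem]; exact hvW
  have hSX : S ≤ X := le_sup_left
  have hdisj : S ⊓ Submodule.span ℂ {v} = ⊥ := by
    rw [Submodule.eq_bot_iff]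
    intro x ⟨hx1, hx2⟩
    have := hspanW hx2
    rw [Submodule.mem_orthogonal] at this
    have h0 : inner (𝕜 := ℂ) x x = 0 := this x (hSW hx1)
    exact inner_self_eq_zero.mp h0
  have hXrank : Module.finrank ℂ X = k := by
    have := Submodule.finrank_sup_add_finrank_inf_eq S (Submodule.span ℂ {v})
    rw [hdisj, finrank_span_singleton hv0, hS, ← hXdef] at this
    simp at this
    omega
  have hXnM : X ∉ M := by
    intro hXM
    have hXW : X ≤ W := le_sup_of_le_right (Finset.le_sup (f := id) (hfin.mem_toFinset.mpr hXM))
    have hvX : v ∈ X := Submodule.mem_sup_right (Submodule.mem_span_singleton_self v)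
    have := hvW
    rw [Submodule.mem_orthogonal] at this
    exact hv0 (inner_self_eq_zero.mp (this v (hXW hvX)))
  have hcomp : ∀ Y ∈ M, Compatible X Y := by
    intro Y hYM
    refine ⟨Submodule.span ℂ {v}, Sᗮ ⊓ Y, S, ?_, ?_, ?_, sup_comm _ _, ?_⟩
    · -- span v ⟂ Sᗮ ⊓ Y
      have hYW : Y ≤ W := le_sup_of_le_right (Finset.le_sup (f := id) (hfin.mem_toFinset.mpr hYM))
      exact hspanW.trans ((Submodule.orthogonal_le (inf_le_right.trans hYW)))
    · exact hspanW.trans (Submodule.orthogonal_le hSW)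
    · exact inf_le_left
    · exact (Submodule.sup_orthogonal_inf_of_hasOrthogonalProjection (hMstar Y hYM).1).symm.trans
        (sup_comm _ _)
  have hsub : M ⊆ insert X M := Set.subset_insert _ _
  have hM' := hmax (insert X M) ?_ ?_ hsub
  · exact hXnM (hM' ▸ Set.mem_insert X M)
  · rintro Y (rfl | hY)
    · exact ⟨hSX, hXrank⟩
    · exact hMstar Y hY
  · rintro A (rfl | hA) B (rfl | hB) hne
    · exact absurd rfl hne
    · exact hcomp B hB
    · exact (hcomp A hA).symm'
    · exact hMcomp A hA B hB hne
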